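/- For every integer n ≥ 2, the maximum number of maximal independent sets in a simple graph on n vertices is: 3^{n/3} if n ≡ 0 (mod 3); (4/3)·3^{⌊n/3⌋} if n ≡ 1 (mod 3); and 2·3^{⌊n/3⌋} if n ≡ 2 (mod 3). That is, mi_1(n) equals this value. -/

import Mathlib

open SimpleGraph

/-- `D` is a `k`-dominating independent set of `G`: `D` is independent and every vertex
outside `D` has at least `k` neighbours in `D`. -/
def IsKDIS {V : Type*} [Fintype V] (G : SimpleGraph V) (k : ℕ) (D : Finset V) : Prop :=
  (∀ x ∈ D, ∀ y ∈ D, ¬ G.Adj x y) ∧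
  ∀ v : V, v ∉ D → k ≤ (G.neighborSet v ∩ (D : Set V)).ncard

/-- The number of `k`-dominating independent sets of `G`. -/
noncomputable def numKDIS {V : Type*} [Fintype V] (G : SimpleGraph V) (k : ℕ) : ℕ :=
  Nat.card {D : Finset V // IsKDIS G k D}

/-- `mi k n`: the maximum number of `k`-dominating independent sets in a simple graph
on `n` vertices. -/
noncomputable def mi (k n : ℕ) : ℕ :=
  sSup {m : ℕ | ∃ G : SimpleGraph (Fin n), numKDIS G k = m}

/-- `mDIS k t`: the smallest `n` such that some simple graph on `n` vertices has at least
`t` `k`-dominating independent sets. -/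
noncomputable def mDIS (k t : ℕ) : ℕ :=
  sInf {n : ℕ | ∃ G : SimpleGraph (Fin n), t ≤ numKDIS G k}

namespace MM

def f (n : ℕ) : ℕ :=
  if n ≤ 1 then 1
  else if n % 3 = 0 then 3 ^ (n / 3)
  else if n % 3 = 1 then 4 * 3 ^ (n / 3 - 1)
  else 2 * 3 ^ (n / 3)

lemma f_pos (n : ℕ) : 0 < f n := by
  unfold f; split_ifs <;> positivity

lemma f_step (m : ℕ) (hm : 2 ≤ m) : f (m + 3) = 3 * f m := by
  unfold f
  have h3 : (m + 3) % 3 = m % 3 := by omega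
  have hd : (m + 3) / 3 = m / 3 + 1 := by omega
  have h1 : ¬ (m + 3 ≤ 1) := by omega
  have h2 : ¬ (m ≤ 1) := by omega
  rw [h3, hd, if_neg h1, if_neg h2]
  split_ifs with ha hb
  · rw [pow_succ]; ring
  · have : 1 ≤ m / 3 := by omega
    rw [show m / 3 + 1 - 1 = (m / 3 - 1) + 1 by omega, pow_succ]; ring
  · rw [pow_succ]; ring

lemma mul_f_le4 (k m : ℕ) (hk1 : 1 ≤ k) (hk : k ≤ 4) : k * f m ≤ f (m + k) := by
  induction m using Nat.strong_induction_on with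
  | _ m IH =>
    rcases lt_or_ge m 5 with h | h
    · interval_cases m <;> interval_cases k <;> decide
    · have h1 : f m = 3 * f (m - 3) := by
        have := f_step (m - 3) (by omega)
        rwa [show m - 3 + 3 = m by omega] at this
      have h2 : f (m + k) = 3 * f (m - 3 + k) := by
        have := f_step (m - 3 + k) (by omega)
        rwa [show m - 3 + k + 3 = m + k by omega] at this
      have h3 := IH (m - 3) (by omega)
      calc k * f m = 3 * (k * f (m - 3)) := by rw [h1]; ring
        _ ≤ 3 * f (m - 3 + k) := Nat.mul_le_mul_left 3 h3
        _ = f (m + k) := h2.symm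

lemma mul_f_le (k m : ℕ) (hk : 1 ≤ k) : k * f m ≤ f (m + k) := by
  induction k using Nat.strong_induction_on with
  | _ k IH =>
    rcases le_or_gt k 4 with h | h
    · exact mul_f_le4 k m hk h
    · have h1 : (k - 3) * f m ≤ f (m + (k - 3)) := IH (k - 3) (by omega) (by omega)
      have h2 : 3 * f (m + (k - 3)) ≤ f (m + (k - 3) + 3) := mul_f_le4 3 _ (by omega) (by omega)
      have h3 : k * f m ≤ 3 * ((k - 3) * f m) := by
        have : k ≤ 3 * (k - 3) := by omega
        calc k * f m ≤ 3 * (k - 3) * f m := Nat.mul_le_mul_right _ this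
          _ = 3 * ((k - 3) * f m) := by ring
      calc k * f m ≤ 3 * ((k - 3) * f m) := h3
        _ ≤ 3 * f (m + (k - 3)) := Nat.mul_le_mul_left 3 h1
        _ ≤ f (m + (k - 3) + 3) := h2
        _ = f (m + k) := by congr 1; omega

lemma f_mono : Monotone f := by
  apply monotone_nat_of_le_succ
  intro n
  simpa using mul_f_le 1 n le_rfl

lemma numKDIS_eq_card {V : Type*} [Fintype V] [DecidableEq V] (G : SimpleGraph V) (k : ℕ)
    [DecidablePred (IsKDIS G k)] :
    numKDIS G k = (Finset.univ.filter (fun D : Finset V => IsKDIS G k D)).card := by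
  rw [numKDIS, Nat.card_eq_fintype_card, Fintype.card_subtype]

theorem upper : ∀ n : ℕ, ∀ (V : Type) [Fintype V] (G : SimpleGraph V),
    Fintype.card V = n → numKDIS G 1 ≤ f n := by
  intro n
  induction n using Nat.strong_induction_on with
  | _ n IH =>
  intro V _ G hcard
  classical
  rcases Nat.eq_zero_or_pos n with h0 | hpos
  · have h1 : numKDIS G 1 ≤ Nat.card (Finset V) :=
      Nat.card_le_card_of_injective Subtype.val Subtype.val_injective
    have h2 : Nat.card (Finset V) = 1 := by
      rw [Nat.card_eq_fintype_card, Fintype.card_finset, hcard, h0]; norm_num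
    exact (h1.trans_eq h2).trans (f_pos n)
  · have hne : Nonempty V := Fintype.card_pos_iff.mp (hcard ▸ hpos)
    obtain ⟨v, -, hv⟩ := Finset.exists_min_image Finset.univ (fun u => G.degree u)
      ⟨Classical.arbitrary V, Finset.mem_univ _⟩
    set d := G.degree v with hd
    set Nv : Finset V := insert v (G.neighborFinset v) with hNv
    set M : Finset (Finset V) := Finset.univ.filter (fun D : Finset V => IsKDIS G 1 D) with hM
    -- every KDIS meets Nv
    have hcover : M ⊆ Nv.biUnion (fun u => M.filter (fun D => u ∈ D)) := by
      intro D hD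
      have hDk : IsKDIS G 1 D := by simpa [hM] using hD
      by_cases hvD : v ∈ D
      · exact Finset.mem_biUnion.2 ⟨v, Finset.mem_insert_self _ _,
          Finset.mem_filter.2 ⟨hD, hvD⟩⟩
      · have h1 := hDk.2 v hvD
        have hne' : (G.neighborSet v ∩ (D : Set V)).Nonempty := by
          apply Set.nonempty_of_ncard_ne_zero; omega
        obtain ⟨u, hu1, hu2⟩ := hne'
        exact Finset.mem_biUnion.2 ⟨u, Finset.mem_insert_of_mem (by simpa using hu1),
          Finset.mem_filter.2 ⟨hD, hu2⟩⟩
    -- bound each piece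
    have hpiece : ∀ u ∈ Nv, (M.filter (fun D => u ∈ D)).card ≤ f (n - 1 - d) := by
      intro u _
      set s : Finset V := Finset.univ \ insert u (G.neighborFinset u) with hs
      set G' : SimpleGraph {x // x ∈ s} := G.comap Subtype.val with hG'
      have hscard : s.card = n - 1 - G.degree u := by
        rw [hs, Finset.card_sdiff_of_subset (Finset.subset_univ _), Finset.card_univ, hcard,
          Finset.card_insert_of_notMem (G.notMem_neighborFinset_self u),
          G.card_neighborFinset_eq_degree]
        omega
      -- the restriction map
      have hinj : Set.InjOn (fun D : Finset V => D.subtype (· ∈ s))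
          ↑(M.filter (fun D => u ∈ D)) := by
        intro D1 hD1 D2 hD2 heq
        have heq' : D1.subtype (· ∈ s) = D2.subtype (· ∈ s) := heq
        simp only [Finset.coe_filter, Set.mem_setOf_eq, hM, Finset.mem_filter,
          Finset.mem_univ, true_and] at hD1 hD2
        have key : ∀ (D : Finset V), IsKDIS G 1 D → u ∈ D →
            D = insert u (D.filter (· ∈ s)) := by
          intro D hDk huD
          ext x
          simp only [Finset.mem_insert, Finset.mem_filter]
          constructor
          · intro hx
            by_cases hxu : x = u
            · exact Or.inl hxu
            · refine Or.inr ⟨hx, ?_⟩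
              simp only [hs, Finset.mem_sdiff, Finset.mem_univ, true_and,
                Finset.mem_insert, mem_neighborFinset]
              push_neg
              exact ⟨hxu, hDk.1 u huD x hx⟩
          · rintro (rfl | ⟨hx, -⟩) <;> [exact huD; exact hx]
        have h1 : D1.filter (· ∈ s) = D2.filter (· ∈ s) := by
          have : ∀ x, x ∈ D1.filter (· ∈ s) ↔ x ∈ D2.filter (· ∈ s) := by
            intro x
            by_cases hxs : x ∈ s
            · have e1 : (⟨x, hxs⟩ : {y // y ∈ s}) ∈ D1.subtype (· ∈ s) ↔
                  (⟨x, hxs⟩ : {y // y ∈ s}) ∈ D2.subtype (· ∈ s) := by rw [heq']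
              simp only [Finset.mem_subtype] at e1
              simp [Finset.mem_filter, hxs, e1]
            · simp [Finset.mem_filter, hxs]
          exact Finset.ext this
        rw [key D1 hD1.1 hD1.2, key D2 hD2.1 hD2.2, h1]
      have hmaps : ∀ D ∈ M.filter (fun D => u ∈ D),
          (D.subtype (· ∈ s)) ∈ Finset.univ.filter (fun D' => IsKDIS G' 1 D') := by
        intro D hD
        simp only [hM, Finset.mem_filter, Finset.mem_univ, true_and] at hD
        obtain ⟨⟨hind, hdom⟩, huD⟩ := hD
        refine Finset.mem_filter.2 ⟨Finset.mem_univ _, ?_, ?_⟩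
        · rintro ⟨x, hx⟩ hx' ⟨y, hy⟩ hy' hadj
          simp only [Finset.mem_subtype] at hx' hy'
          exact hind x hx' y hy' hadj
        · rintro ⟨w, hw⟩ hw'
          simp only [Finset.mem_subtype] at hw'
          have hwD : w ∉ D := hw'
          have h1 := hdom w hwD
          have hne' : (G.neighborSet w ∩ (D : Set V)).Nonempty := by
            apply Set.nonempty_of_ncard_ne_zero; omega
          obtain ⟨x, hx1, hx2⟩ := hne'
          have hxs : x ∈ s := by
            simp only [hs, Finset.mem_sdiff, Finset.mem_univ, true_and,
              Finset.mem_insert, mem_neighborFinset]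
            push_neg
            constructor
            · rintro rfl
              -- u adjacent to w, but w ∈ s
              have : w ∈ s := hw
              simp only [hs, Finset.mem_sdiff, Finset.mem_insert,
                mem_neighborFinset] at this
              exact this.2 (Or.inr (by simpa using hx1.symm))
            · exact hind u huD x hx2
          have : (⟨x, hxs⟩ : {y // y ∈ s}) ∈
              G'.neighborSet ⟨w, hw⟩ ∩ ((D.subtype (· ∈ s) : Finset {y // y ∈ s}) : Set {y // y ∈ s}) := by
            constructor
            · simp only [hG', mem_neighborSet, comap_adj]
              simpa using hx1
            · simpa [Finset.mem_subtype] using hx2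
          have hfin : (G'.neighborSet ⟨w, hw⟩ ∩
              ((D.subtype (· ∈ s) : Finset {y // y ∈ s}) : Set {y // y ∈ s})).Finite :=
            Set.toFinite _
          have hpos' : 0 < (G'.neighborSet ⟨w, hw⟩ ∩
              ((D.subtype (· ∈ s) : Finset {y // y ∈ s}) : Set {y // y ∈ s})).ncard :=
            (Set.ncard_pos hfin).2 ⟨_, this⟩
          omega
      have hcard2 : (M.filter (fun D => u ∈ D)).card ≤
          (Finset.univ.filter (fun D' : Finset {x // x ∈ s} => IsKDIS G' 1 D')).card :=
        Finset.card_le_card_of_injOn _ hmaps hinj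
      have hIH : numKDIS G' 1 ≤ f (n - 1 - G.degree u) := by
        have hlt : n - 1 - G.degree u < n := by omega
        have := IH (n - 1 - G.degree u) hlt {x // x ∈ s} G'
          (by rw [Fintype.card_coe]; exact hscard)
        exact this
      have hmono : f (n - 1 - G.degree u) ≤ f (n - 1 - d) := by
        apply f_mono
        have : d ≤ G.degree u := hv u (Finset.mem_univ u)
        omega
      calc (M.filter (fun D => u ∈ D)).card
          ≤ _ := hcard2
        _ = numKDIS G' 1 := (numKDIS_eq_card G' 1).symm
        _ ≤ f (n - 1 - G.degree u) := hIH
        _ ≤ f (n - 1 - d) := hmono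
    have hNvcard : Nv.card = d + 1 := by
      rw [hNv, Finset.card_insert_of_notMem (G.notMem_neighborFinset_self v),
        G.card_neighborFinset_eq_degree]
    have hdlt : d < n := by
      rw [hd, ← hcard]
      exact (G.degree_lt_card_verts v)
    calc numKDIS G 1 = M.card := numKDIS_eq_card G 1
      _ ≤ (Nv.biUnion (fun u => M.filter (fun D => u ∈ D))).card := Finset.card_le_card hcover
      _ ≤ ∑ u ∈ Nv, (M.filter (fun D => u ∈ D)).card := Finset.card_biUnion_le
      _ ≤ ∑ _u ∈ Nv, f (n - 1 - d) := Finset.sum_le_sum hpiece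
      _ = (d + 1) * f (n - 1 - d) := by rw [Finset.sum_const, hNvcard, smul_eq_mul]
      _ ≤ f (n - 1 - d + (d + 1)) := mul_f_le (d + 1) (n - 1 - d) (by omega)
      _ = f n := by congr 1; omega


def cliqueSum (t : ℕ) (m : Fin t → ℕ) : SimpleGraph (Σ i : Fin t, Fin (m i)) where
  Adj x y := x.1 = y.1 ∧ x ≠ y
  symm := ⟨by rintro x y ⟨h1, h2⟩; exact ⟨h1.symm, h2.symm⟩⟩
  loopless := ⟨fun x h => h.2 rfl⟩

lemma numKDIS_comap {V W : Type*} [Fintype V] [Fintype W] (e : V ≃ W) (G : SimpleGraph W)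
    (k : ℕ) : numKDIS (G.comap e) k = numKDIS G k := by
  classical
  apply Nat.card_congr
  apply Equiv.subtypeEquiv e.finsetCongr
  intro D
  have hmap : ∀ x, x ∈ e.finsetCongr D ↔ e.symm x ∈ D := by
    intro x
    rw [Equiv.finsetCongr_apply, Finset.mem_map_equiv]
  constructor
  · rintro ⟨hind, hdom⟩
    constructor
    · intro x hx y hy hadj
      exact hind _ ((hmap x).1 hx) _ ((hmap y).1 hy) (by simpa [comap_adj] using hadj)
    · intro w hw
      have h1 := hdom (e.symm w) (by simpa using (hmap w).not.1 hw)
      have himg : e '' ((G.comap e).neighborSet (e.symm w) ∩ (D : Set V)) =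
          G.neighborSet w ∩ ((e.finsetCongr D : Finset W) : Set W) := by
        ext y
        simp only [Set.mem_image, Set.mem_inter_iff, mem_neighborSet, comap_adj]
        constructor
        · rintro ⟨a, ⟨ha1, ha2⟩, rfl⟩
          refine ⟨by simpa using ha1, ?_⟩
          rw [Finset.mem_coe, hmap]; simpa using ha2
        · rintro ⟨hy1, hy2⟩
          refine ⟨e.symm y, ⟨by simpa using hy1, ?_⟩, by simp⟩
          rw [Finset.mem_coe, hmap] at hy2; exact hy2
      calc k ≤ ((G.comap e).neighborSet (e.symm w) ∩ (D : Set V)).ncard := h1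
        _ = (G.neighborSet w ∩ ((e.finsetCongr D : Finset W) : Set W)).ncard := by
            rw [← himg, Set.ncard_image_of_injective _ e.injective]
  · rintro ⟨hind, hdom⟩
    constructor
    · intro x hx y hy hadj
      refine hind (e x) ?_ (e y) ?_ (by simpa [comap_adj] using hadj) <;>
        · rw [hmap]; simpa
    · intro w hw
      have h1 := hdom (e w) (by rw [hmap]; simpa)
      have himg : e '' ((G.comap e).neighborSet w ∩ (D : Set V)) =
          G.neighborSet (e w) ∩ ((e.finsetCongr D : Finset W) : Set W) := by
        ext y
        simp only [Set.mem_image, Set.mem_inter_iff, mem_neighborSet, comap_adj]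
        constructor
        · rintro ⟨a, ⟨ha1, ha2⟩, rfl⟩
          exact ⟨ha1, by rw [Finset.mem_coe, hmap]; simpa using ha2⟩
        · rintro ⟨hy1, hy2⟩
          refine ⟨e.symm y, ⟨by simpa using hy1, ?_⟩, by simp⟩
          rw [Finset.mem_coe, hmap] at hy2; exact hy2
      calc k ≤ (G.neighborSet (e w) ∩ ((e.finsetCongr D : Finset W) : Set W)).ncard := h1
        _ = ((G.comap e).neighborSet w ∩ (D : Set V)).ncard := by
            rw [← himg, Set.ncard_image_of_injective _ e.injective]

lemma count_cliqueSum (t : ℕ) (m : Fin t → ℕ) (hm : ∀ i, 0 < m i) :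
    numKDIS (cliqueSum t m) 1 = ∏ i, m i := by
  classical
  set V := Σ i : Fin t, Fin (m i)
  set G := cliqueSum t m with hG
  set Ψ : (∀ i, Fin (m i)) → Finset V := fun g => Finset.univ.image (fun i : Fin t => ⟨i, g i⟩)
    with hΨ
  have hmem : ∀ (g) (x : V), x ∈ Ψ g ↔ x.2 = g x.1 := by
    intro g x
    simp only [hΨ, Finset.mem_image, Finset.mem_univ, true_and]
    constructor
    · rintro ⟨i, rfl⟩; rfl
    · intro h
      refine ⟨x.1, ?_⟩
      obtain ⟨i, a⟩ := x
      simp_all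
  have hKDIS : ∀ g, IsKDIS G 1 (Ψ g) := by
    intro g
    constructor
    · intro x hx y hy hadj
      rw [hmem] at hx hy
      obtain ⟨i, a⟩ := x
      obtain ⟨j, b⟩ := y
      obtain ⟨h1, h2⟩ := hadj
      dsimp at h1 h2 hx hy
      subst h1
      exact h2 (by rw [hx, hy])
    · rintro ⟨i, a⟩ hv
      rw [hmem] at hv
      have : (⟨i, g i⟩ : V) ∈ G.neighborSet ⟨i, a⟩ ∩ (↑(Ψ g) : Set V) := by
        constructor
        · refine ⟨rfl, ?_⟩
          intro h
          exact hv (show a = g i by simpa using h)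
        · rw [Finset.mem_coe, hmem]
      have hfin : (G.neighborSet ⟨i, a⟩ ∩ (↑(Ψ g) : Set V)).Finite := Set.toFinite _
      have := (Set.ncard_pos hfin).2 ⟨_, this⟩
      omega
  have hbij : Function.Bijective (fun g => (⟨Ψ g, hKDIS g⟩ : {D : Finset V // IsKDIS G 1 D})) := by
    constructor
    · intro g g' h
      have h' : Ψ g = Ψ g' := congrArg Subtype.val h
      funext i
      have : (⟨i, g i⟩ : V) ∈ Ψ g' := by rw [← h']; rw [hmem]
      rw [hmem] at this
      exact this
    · rintro ⟨D, hind, hdom⟩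
      have hex : ∀ i : Fin t, ∃ a : Fin (m i), (⟨i, a⟩ : V) ∈ D := by
        intro i
        by_contra hno
        push_neg at hno
        have hv : (⟨i, ⟨0, hm i⟩⟩ : V) ∉ D := hno _
        have h1 := hdom _ hv
        have hne : (G.neighborSet ⟨i, ⟨0, hm i⟩⟩ ∩ (D : Set V)).Nonempty :=
          Set.nonempty_of_ncard_ne_zero (by omega)
        obtain ⟨y, hy1, hy2⟩ := hne
        obtain ⟨j, b⟩ := y
        obtain ⟨hj, -⟩ := hy1
        dsimp at hj
        subst hj
        exact hno b hy2
      choose g hg using hex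
      refine ⟨g, ?_⟩
      ext : 1
      dsimp
      apply Finset.ext
      intro x
      rw [hmem]
      obtain ⟨i, a⟩ := x
      dsimp
      constructor
      · rintro rfl; exact hg i
      · intro hx
        by_contra hne
        refine hind _ hx _ (hg i) ⟨rfl, ?_⟩
        intro h
        exact hne (show a = g i by simpa using h)
  calc numKDIS G 1 = Nat.card (∀ i, Fin (m i)) := (Nat.card_eq_of_bijective _ hbij).symm
    _ = ∏ i, m i := by simp [Nat.card_eq_fintype_card]


lemma exists_graph_of_sizes (n t : ℕ) (m : Fin t → ℕ) (hm : ∀ i, 0 < m i)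
    (hsum : ∑ i, m i = n) : ∃ G : SimpleGraph (Fin n), numKDIS G 1 = ∏ i, m i := by
  have hcard : Fintype.card (Σ i : Fin t, Fin (m i)) = n := by
    simp [Fintype.card_sigma, hsum]
  have e : Fin n ≃ Σ i : Fin t, Fin (m i) := (Fintype.equivFinOfCardEq hcard).symm
  exact ⟨(cliqueSum t m).comap e, by rw [numKDIS_comap e, count_cliqueSum t m hm]⟩

lemma exists_graph (n : ℕ) (hn : 2 ≤ n) : ∃ G : SimpleGraph (Fin n), numKDIS G 1 = f n := by
  have h3 : n % 3 = 0 ∨ n % 3 = 1 ∨ n % 3 = 2 := by omega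
  rcases h3 with h | h | h
  · obtain ⟨G, hG⟩ := exists_graph_of_sizes n (n / 3) (fun _ => 3) (fun _ => by norm_num)
      (by simp [Finset.sum_const]; omega)
    refine ⟨G, ?_⟩
    rw [hG]
    simp only [f, if_neg (by omega : ¬ n ≤ 1), if_pos h]
    rw [Finset.prod_const]
    simp
  · have hq : 1 ≤ n / 3 := by omega
    obtain ⟨q, hq'⟩ : ∃ q, n / 3 = q + 1 := ⟨n / 3 - 1, by omega⟩
    have hsum : ∑ i : Fin (n / 3), (if (i : ℕ) = 0 then (4:ℕ) else 3) = n := by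
      rw [hq', Fin.sum_univ_succ]
      have hsucc : ∀ i : Fin q, (if ((i.succ : Fin (q+1)) : ℕ) = 0 then (4:ℕ) else 3) = 3 := by
        intro i; simp
      rw [if_pos (by simp : ((0 : Fin (q+1)) : ℕ) = 0),
        Finset.sum_congr rfl (fun i _ => hsucc i), Finset.sum_const,
        Finset.card_univ, Fintype.card_fin, smul_eq_mul]
      omega
    obtain ⟨G, hG⟩ := exists_graph_of_sizes n (n / 3)
      (fun i => if (i : ℕ) = 0 then 4 else 3)
      (fun i => by split <;> norm_num) hsum
    · refine ⟨G, ?_⟩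
      rw [hG]
      simp only [f, if_neg (by omega : ¬ n ≤ 1), if_neg (by omega : ¬ n % 3 = 0), if_pos h]
      rw [hq', Fin.prod_univ_succ]
      have hsucc : ∀ i : Fin q, (if ((i.succ : Fin (q+1)) : ℕ) = 0 then (4:ℕ) else 3) = 3 := by
        intro i; simp
      rw [if_pos (by simp : ((0 : Fin (q+1)) : ℕ) = 0),
        Finset.prod_congr rfl (fun i _ => hsucc i), Finset.prod_const,
        Finset.card_univ, Fintype.card_fin]
      simp
  · have hsum : ∑ i : Fin (n / 3 + 1), (if (i : ℕ) = 0 then (2:ℕ) else 3) = n := by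
      rw [Fin.sum_univ_succ]
      have hsucc : ∀ i : Fin (n / 3), (if ((i.succ : Fin (n/3+1)) : ℕ) = 0 then (2:ℕ) else 3) = 3 := by
        intro i; simp
      rw [if_pos (by simp : ((0 : Fin (n/3+1)) : ℕ) = 0),
        Finset.sum_congr rfl (fun i _ => hsucc i), Finset.sum_const,
        Finset.card_univ, Fintype.card_fin, smul_eq_mul]
      omega
    obtain ⟨G, hG⟩ := exists_graph_of_sizes n (n / 3 + 1)
      (fun i => if (i : ℕ) = 0 then 2 else 3)
      (fun i => by split <;> norm_num) hsum
    · refine ⟨G, ?_⟩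
      rw [hG]
      simp only [f, if_neg (by omega : ¬ n ≤ 1), if_neg (by omega : ¬ n % 3 = 0),
        if_neg (by omega : ¬ n % 3 = 1)]
      rw [Fin.prod_univ_succ]
      have hsucc : ∀ i : Fin (n / 3), (if ((i.succ : Fin (n/3+1)) : ℕ) = 0 then (2:ℕ) else 3) = 3 := by
        intro i; simp
      rw [if_pos (by simp : ((0 : Fin (n/3+1)) : ℕ) = 0),
        Finset.prod_congr rfl (fun i _ => hsucc i), Finset.prod_const,
        Finset.card_univ, Fintype.card_fin]


lemma mi_eq (n : ℕ) (hn : 2 ≤ n) : mi 1 n = f n := by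
  have hmem : f n ∈ {m : ℕ | ∃ G : SimpleGraph (Fin n), numKDIS G 1 = m} := exists_graph n hn
  have hub : ∀ m ∈ {m : ℕ | ∃ G : SimpleGraph (Fin n), numKDIS G 1 = m}, m ≤ f n := by
    rintro m ⟨G, rfl⟩
    exact upper n (Fin n) G (by simp)
  exact IsGreatest.csSup_eq ⟨hmem, hub⟩
end MM

theorem moon_moser (n : ℕ) (hn : 2 ≤ n) :
    (n % 3 = 0 → mi 1 n = 3 ^ (n / 3)) ∧
    (n % 3 = 1 → mi 1 n = 4 * 3 ^ (n / 3 - 1)) ∧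
    (n % 3 = 2 → mi 1 n = 2 * 3 ^ (n / 3)) := by
  refine ⟨fun h => ?_, fun h => ?_, fun h => ?_⟩ <;>
    rw [MM.mi_eq n hn] <;>
    simp only [MM.f, if_neg (by omega : ¬ n ≤ 1)]
  · rw [if_pos h]
  · rw [if_neg (by omega : ¬ n % 3 = 0), if_pos h]
  · rw [if_neg (by omega : ¬ n % 3 = 0), if_neg (by omega : ¬ n % 3 = 1)]
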